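/- Let $f : \omega_1 \to \omega_1$ be a function such that for every nonzero $\alpha < \omega_2$ and every canonical function $g$ for $\alpha$, the set $\{\nu < \omega_1 : g(\nu) < f(\nu)\}$ contains a club. Let $\mathcal{K}^f$ be the collection of countable elementary submodels $N$ of $(H(\omega_2); \in, \vec e, f)$ such that $\mathrm{ot}(N \cap \omega_2) < f(\delta_N)$. Then $\mathcal{K}^f$ is projective stationary: for every function $F : [\omega_2]^{<\omega} \to \omega_2$ and every stationary $S \subseteq \omega_1$ there is a countable $X \subseteq \omega_2$ closed under $F$ such that $\delta := X \cap \omega_1 \in S$ and $f(\delta) > \mathrm{ot}(X)$. -/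

import Mathlib

noncomputable section

universe u

open Cardinal

/-- The first uncountable ordinal. -/
def omega1 : Ordinal := (aleph 1).ord

/-- The second uncountable ordinal. -/
def omega2 : Ordinal := (aleph 2).ord

/-- The order type of a set of ordinals: the unique ordinal `o` such that `A` is the image
of `Iio o` under a strictly monotone map (with junk value if no such `o` exists). -/
def OT (A : Set Ordinal.{u}) : Ordinal.{u} :=
  sInf {o : Ordinal.{u} | ∃ g : Ordinal.{u} → Ordinal.{u},
    StrictMonoOn g (Set.Iio o) ∧ g '' Set.Iio o = A}

/-- `C` is a club (closed and unbounded) subset of `κ`: all of its members are `< κ`, it is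
unbounded in `κ`, and it contains the supremum of each of its nonempty subsets bounded in `κ`. -/
def IsClubIn (C : Set Ordinal) (κ : Ordinal) : Prop :=
  (∀ x ∈ C, x < κ) ∧ (∀ α < κ, ∃ β ∈ C, α < β) ∧
  (∀ S : Set Ordinal, S ⊆ C → S.Nonempty → sSup S < κ → sSup S ∈ C)

/-- `S` is a stationary subset of `κ`: it meets every club of `κ`. -/
def IsStationaryIn (S : Set Ordinal) (κ : Ordinal) : Prop :=
  (∀ x ∈ S, x < κ) ∧ ∀ C, IsClubIn C κ → (S ∩ C).Nonempty

open Ordinal Set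

section Aux

lemma omega1_pos : (0:Ordinal.{u}) < omega1 := by
  rw [omega1, Cardinal.lt_ord]
  simpa using aleph0_lt_aleph_one.trans_le' aleph0_pos.le

lemma lt_omega1_iff {o : Ordinal.{u}} : o < omega1 ↔ o.card < aleph 1 := Cardinal.lt_ord

lemma lt_omega2_iff {o : Ordinal.{u}} : o < omega2 ↔ o.card < aleph 2 := Cardinal.lt_ord

lemma omega1_lt_omega2 : (omega1 : Ordinal.{u}) < omega2 := by
  rw [omega1, omega2, Cardinal.ord_lt_ord]
  exact aleph_lt_aleph.2 one_lt_two

lemma countable_of_lt_omega1 {x : Ordinal.{u}} (hx : x < omega1) : (Set.Iio x).Countable := by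
  rw [Cardinal.countable_iff_lt_aleph_one, Ordinal.mk_Iio_ordinal]
  have : x.card < aleph 1 := lt_omega1_iff.1 hx
  calc Cardinal.lift.{u+1} x.card < Cardinal.lift.{u+1} (aleph 1) := Cardinal.lift_lt.2 this
    _ = aleph 1 := by rw [Cardinal.lift_aleph, Ordinal.lift_one]

lemma sSup_lt_omega1 {s : Set Ordinal.{u}} (hc : s.Countable) (hs : ∀ x ∈ s, x < omega1) :
    sSup s < omega1 := by
  rcases s.eq_empty_or_nonempty with rfl | hne
  · simpa [csSup_empty] using omega1_pos
  obtain ⟨φ, rfl⟩ := hc.exists_eq_range hne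
  have : sSup (Set.range φ) = ⨆ n, φ n := rfl
  rw [this, omega1]
  refine Ordinal.iSup_lt_ord_lift ?_ (fun n => hs _ ⟨n, rfl⟩)
  rw [Cardinal.isRegular_aleph_one.cof_eq]
  simpa using aleph0_lt_aleph_one

lemma sSup_lt_omega2_of_countable {s : Set Ordinal.{u}} (hc : s.Countable)
    (hs : ∀ x ∈ s, x < omega2) : sSup s < omega2 := by
  rcases s.eq_empty_or_nonempty with rfl | hne
  · simpa [csSup_empty] using omega1_pos.trans omega1_lt_omega2
  obtain ⟨φ, rfl⟩ := hc.exists_eq_range hne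
  have : sSup (Set.range φ) = ⨆ n, φ n := rfl
  rw [this, omega2]
  refine Ordinal.iSup_lt_ord_lift ?_ (fun n => hs _ ⟨n, rfl⟩)
  have hreg : (Cardinal.aleph (2:Ordinal.{u})).IsRegular := by
    have := Cardinal.isRegular_aleph_succ (1 : Ordinal.{u})
    rwa [show Order.succ (1:Ordinal.{u}) = 2 by rw [Order.succ_eq_add_one, one_add_one_eq_two]] at this
  rw [hreg.cof_eq]
  simpa using aleph0_lt_aleph_one.trans (aleph_lt_aleph.2 one_lt_two)

lemma succ_lt_omega1 {x : Ordinal.{u}} (hx : x < omega1) : x + 1 < omega1 := by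
  rw [lt_omega1_iff] at hx ⊢
  rw [Ordinal.add_one_eq_succ, Ordinal.card_succ]
  exact Cardinal.add_lt_of_lt aleph0_lt_aleph_one.le hx (one_lt_aleph0.trans aleph0_lt_aleph_one)

lemma succ_lt_omega2 {x : Ordinal.{u}} (hx : x < omega2) : x + 1 < omega2 := by
  rw [lt_omega2_iff] at hx ⊢
  rw [Ordinal.add_one_eq_succ, Ordinal.card_succ]
  have h2 : ℵ₀ ≤ aleph 2 := aleph0_le_aleph 2
  exact Cardinal.add_lt_of_lt h2 hx (one_lt_aleph0.trans_le h2)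

lemma mul_omega0_lt_omega1 {x : Ordinal.{u}} (hx : x < omega1) : ω * x < omega1 := by
  rw [lt_omega1_iff] at hx ⊢
  rw [Ordinal.card_mul, Ordinal.card_omega0]
  exact Cardinal.mul_lt_of_lt aleph0_lt_aleph_one.le aleph0_lt_aleph_one hx

lemma add_nat_lt_omega1 {x : Ordinal.{u}} (hx : x < omega1) (n : ℕ) : x + n < omega1 := by
  rw [lt_omega1_iff] at hx ⊢
  rw [Ordinal.card_add]
  refine Cardinal.add_lt_of_lt aleph0_lt_aleph_one.le hx ?_
  refine lt_of_le_of_lt ?_ aleph0_lt_aleph_one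
  simpa using Ordinal.card_le_card (Ordinal.nat_lt_omega0 n).le

lemma nat_lt_omega1 (n : ℕ) : (n : Ordinal.{u}) < omega1 := by
  rw [lt_omega1_iff]
  exact lt_of_le_of_lt (Ordinal.card_le_card (Ordinal.nat_lt_omega0 n).le) (by simpa [Ordinal.card_omega0] using aleph0_lt_aleph_one)


lemma le_self_of_strictMonoOn {g : Ordinal.{u} → Ordinal.{u}} {o : Ordinal.{u}}
    (h : StrictMonoOn g (Set.Iio o)) : ∀ x < o, x ≤ g x := by
  intro x hx
  induction x using Ordinal.induction with
  | h x IH =>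
    by_contra hc
    push_neg at hc
    have : g x < o := lt_trans hc hx
    have := IH (g x) hc (lt_trans hc hx)
    exact absurd (h (lt_trans hc hx) hx hc) (by exact not_lt.2 this)

lemma exists_OT_witness {A : Set Ordinal.{u}} {β : Ordinal.{u}} (hA : A ⊆ Set.Iio β) :
    ∃ o : Ordinal.{u}, ∃ g : Ordinal.{u} → Ordinal.{u}, StrictMonoOn g (Set.Iio o) ∧ g '' Set.Iio o = A := by
  set s : Set Ordinal.{u} := A ∪ Set.Ici β with hs
  have hsu : ¬BddAbove s := by
    rintro ⟨b, hb⟩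
    have hmem : max β b + 1 ∈ s := Or.inr (Set.mem_Ici.2 (le_trans (le_max_left _ _) le_self_add))
    have hle := hb hmem
    exact absurd hle (not_le.2 (lt_of_le_of_lt (le_max_right β b) (lt_add_one _)))
  have hrange : Set.range (enumOrd s) = s := range_enumOrd hsu
  have hβs : β ∈ s := Or.inr (Set.mem_Ici.2 le_rfl)
  obtain ⟨oβ, hoβ⟩ : ∃ o, enumOrd s o = β := by
    rw [← hrange] at hβs; exact hβs
  set T : Set Ordinal.{u} := {o | β ≤ enumOrd s o} with hT
  have hTne : T.Nonempty := ⟨oβ, by simp [hT, hoβ]⟩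
  set o₀ := sInf T with ho₀
  have h₀ : β ≤ enumOrd s o₀ := csInf_mem hTne
  refine ⟨o₀, enumOrd s, (enumOrd_strictMono hsu).strictMonoOn _, ?_⟩
  ext x
  constructor
  · rintro ⟨o, ho, rfl⟩
    have hoT : o ∉ T := fun h => absurd (csInf_le (OrderBot.bddBelow T) h) (not_le.2 ho)
    have hlt : enumOrd s o < β := not_le.1 hoT
    rcases enumOrd_mem hsu o with hmem | hmem
    · exact hmem
    · exact absurd hmem (not_le.2 hlt)
  · intro hx
    have hxs : x ∈ s := Or.inl hx
    rw [← hrange] at hxs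
    obtain ⟨o, rfl⟩ := hxs
    refine ⟨o, ?_, rfl⟩
    by_contra hc
    have hle : o₀ ≤ o := not_lt.1 hc
    have : β ≤ enumOrd s o := h₀.trans ((enumOrd_strictMono hsu).monotone hle)
    exact absurd (hA hx) (not_lt.2 this)

lemma OT_spec {A : Set Ordinal.{u}} {β : Ordinal.{u}} (hA : A ⊆ Set.Iio β) :
    ∃ g, StrictMonoOn g (Set.Iio (OT A)) ∧ g '' Set.Iio (OT A) = A := by
  have : OT A ∈ {o : Ordinal.{u} | ∃ g : Ordinal.{u} → Ordinal.{u},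
      StrictMonoOn g (Set.Iio o) ∧ g '' Set.Iio o = A} := by
    apply csInf_mem
    obtain ⟨o, g, h1, h2⟩ := exists_OT_witness hA
    exact ⟨o, g, h1, h2⟩
  exact this

lemma OT_le {A : Set Ordinal.{u}} {β : Ordinal.{u}} (hA : A ⊆ Set.Iio β) : OT A ≤ β := by
  obtain ⟨g, hg, him⟩ := OT_spec hA
  by_contra hc
  push_neg at hc
  have hβ : β ∈ Set.Iio (OT A) := hc
  have := le_self_of_strictMonoOn hg β hc
  have : g β ∈ A := him ▸ ⟨β, hβ, rfl⟩
  exact absurd (hA this) (not_lt.2 (le_self_of_strictMonoOn hg β hc))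

lemma OT_image {A : Set Ordinal.{u}} {h : Ordinal.{u} → Ordinal.{u}}
    (hmono : StrictMonoOn h A) : OT (h '' A) = OT A := by
  unfold OT
  congr 1
  ext o
  simp only [Set.mem_setOf_eq]
  constructor
  · rintro ⟨g, hg, him⟩
    refine ⟨(Function.invFunOn h A) ∘ g, ?_, ?_⟩
    · intro x hx y hy hxy
      have hgx : g x ∈ h '' A := him ▸ ⟨x, hx, rfl⟩
      have hgy : g y ∈ h '' A := him ▸ ⟨y, hy, rfl⟩
      obtain ⟨a, ha, hae⟩ := hgx
      obtain ⟨b, hb, hbe⟩ := hgy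
      have hinj : Set.InjOn h A := hmono.injOn
      have h1 : Function.invFunOn h A (g x) = a := hae ▸ hinj.leftInvOn_invFunOn ha
      have h2 : Function.invFunOn h A (g y) = b := hbe ▸ hinj.leftInvOn_invFunOn hb
      simp only [Function.comp_apply, h1, h2]
      have : h a < h b := by rw [hae, hbe]; exact hg hx hy hxy
      exact (hmono.lt_iff_lt ha hb).1 this
    · rw [Set.image_comp, him]
      exact hmono.injOn.invFunOn_image Set.Subset.rfl
  · rintro ⟨g, hg, him⟩
    refine ⟨h ∘ g, ?_, ?_⟩
    · intro x hx y hy hxy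
      have hgx : g x ∈ A := him ▸ ⟨x, hx, rfl⟩
      have hgy : g y ∈ A := him ▸ ⟨y, hy, rfl⟩
      exact hmono hgx hgy (hg hx hy hxy)
    · rw [Set.image_comp, him]


lemma IsClubIn.inter {C D : Set Ordinal.{u}} (hC : IsClubIn C omega1)
    (hD : IsClubIn D omega1) : IsClubIn (C ∩ D) omega1 := by
  obtain ⟨hC1, hC2, hC3⟩ := hC
  obtain ⟨hD1, hD2, hD3⟩ := hD
  refine ⟨fun x hx => hC1 x hx.1, ?_, ?_⟩
  · intro a ha
    -- pick functions
    have pCex : ∀ x : Ordinal.{u}, ∃ y, (x < omega1 → y ∈ C ∧ x < y) := by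
      intro x
      by_cases hx : x < omega1
      · obtain ⟨y, hy1, hy2⟩ := hC2 x hx
        exact ⟨y, fun _ => ⟨hy1, hy2⟩⟩
      · exact ⟨0, fun h => absurd h hx⟩
    have pDex : ∀ x : Ordinal.{u}, ∃ y, (x < omega1 → y ∈ D ∧ x < y) := by
      intro x
      by_cases hx : x < omega1
      · obtain ⟨y, hy1, hy2⟩ := hD2 x hx
        exact ⟨y, fun _ => ⟨hy1, hy2⟩⟩
      · exact ⟨0, fun h => absurd h hx⟩
    choose pC hpC using pCex
    choose pD hpD using pDex
    set b : ℕ → Ordinal.{u} := fun n => Nat.rec (pC a) (fun _ x => pC (pD x)) n with hb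
    have hb0 : b 0 = pC a := rfl
    have hbs : ∀ n, b (n+1) = pC (pD (b n)) := fun n => rfl
    have hblt : ∀ n, b n ∈ C ∧ b n < omega1 := by
      intro n
      induction n with
      | zero => have := hpC a ha; exact ⟨this.1, hC1 _ this.1⟩
      | succ n IH =>
        have hD' := hpD (b n) IH.2
        have hC' := hpC (pD (b n)) (hD1 _ hD'.1)
        rw [hbs]
        exact ⟨hC'.1, hC1 _ hC'.1⟩
    have hdlt : ∀ n, pD (b n) ∈ D ∧ b n < pD (b n) ∧ pD (b n) < omega1 := by
      intro n
      have := hpD (b n) (hblt n).2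
      exact ⟨this.1, this.2, hD1 _ this.1⟩
    have hstep : ∀ n, pD (b n) < b (n+1) := by
      intro n
      rw [hbs]
      exact (hpC (pD (b n)) (hdlt n).2.2).2
    set A : Set Ordinal.{u} := Set.range b with hA
    set B : Set Ordinal.{u} := Set.range (fun n => pD (b n)) with hB
    have hAne : A.Nonempty := ⟨b 0, 0, rfl⟩
    have hBne : B.Nonempty := ⟨pD (b 0), 0, rfl⟩
    have hAbd : BddAbove A := ⟨omega1, by rintro x ⟨n, rfl⟩; exact (hblt n).2.le⟩
    have hBbd : BddAbove B := ⟨omega1, by rintro x ⟨n, rfl⟩; exact (hdlt n).2.2.le⟩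
    have hsupeq : sSup A = sSup B := by
      apply le_antisymm
      · apply csSup_le hAne
        rintro x ⟨n, rfl⟩
        exact le_trans (hdlt n).2.1.le (le_csSup hBbd ⟨n, rfl⟩)
      · apply csSup_le hBne
        rintro x ⟨n, rfl⟩
        exact le_trans (hstep n).le (le_csSup hAbd ⟨n+1, rfl⟩)
    have hsuplt : sSup A < omega1 :=
      sSup_lt_omega1 (Set.countable_range b) (by rintro x ⟨n, rfl⟩; exact (hblt n).2)
    refine ⟨sSup A, ⟨?_, ?_⟩, ?_⟩
    · exact hC3 A (by rintro x ⟨n, rfl⟩; exact (hblt n).1) hAne hsuplt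
    · have := hD3 B (by rintro x ⟨n, rfl⟩; exact (hdlt n).1) hBne (hsupeq ▸ hsuplt)
      rwa [← hsupeq] at this
    · exact lt_of_lt_of_le (hpC a ha).2 (le_csSup hAbd ⟨0, rfl⟩)
  · intro T hT hTne hTlt
    exact ⟨hC3 T (fun x hx => (hT hx).1) hTne hTlt, hD3 T (fun x hx => (hT hx).2) hTne hTlt⟩


def listsIn (s : Set Ordinal.{u}) : Set (List Ordinal.{u}) := {l | ∀ a ∈ l, a ∈ s}

lemma listsIn_countable {s : Set Ordinal.{u}} (hs : s.Countable) : (listsIn s).Countable := by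
  have := hs.to_subtype
  refine Set.Countable.mono ?_ (Set.countable_range (fun l : List s => l.map Subtype.val))
  intro l hl
  induction l with
  | nil => exact ⟨[], rfl⟩
  | cons a l IH =>
    obtain ⟨l', hl'⟩ := IH (fun x hx => hl x (List.mem_cons_of_mem a hx))
    exact ⟨⟨a, hl a List.mem_cons_self⟩ :: l', by simp [hl']⟩

variable (F : List Ordinal.{u} → Ordinal.{u})

def clW (A : Set Ordinal.{u}) : ℕ → Set Ordinal.{u}
  | 0 => A
  | n+1 => clW A n ∪ F '' listsIn (clW A n)

def clF (A : Set Ordinal.{u}) : Set Ordinal.{u} := ⋃ n, clW F A n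

lemma clW_mono_base {A B : Set Ordinal.{u}} (hAB : A ⊆ B) : ∀ n, clW F A n ⊆ clW F B n := by
  intro n
  induction n with
  | zero => exact hAB
  | succ n IH =>
    rintro x (hx | ⟨l, hl, rfl⟩)
    · exact Or.inl (IH hx)
    · exact Or.inr ⟨l, fun a ha => IH (hl a ha), rfl⟩

lemma clW_mono {A : Set Ordinal.{u}} {m n : ℕ} (h : m ≤ n) : clW F A m ⊆ clW F A n := by
  induction n with
  | zero => simp_all
  | succ n IH =>
    rcases Nat.lt_or_ge m (n+1) with h' | h'
    · exact subset_trans (IH (Nat.lt_succ_iff.1 h')) Set.subset_union_left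
    · have : m = n+1 := le_antisymm h h'
      subst this; exact subset_rfl

lemma clF_mono {A B : Set Ordinal.{u}} (hAB : A ⊆ B) : clF F A ⊆ clF F B := by
  intro x hx
  obtain ⟨n, hn⟩ := Set.mem_iUnion.1 hx
  exact Set.mem_iUnion.2 ⟨n, clW_mono_base F hAB n hn⟩

lemma subset_clF (A : Set Ordinal.{u}) : A ⊆ clF F A :=
  fun x hx => Set.mem_iUnion.2 ⟨0, hx⟩

lemma clF_closed {A : Set Ordinal.{u}} {l : List Ordinal.{u}} (hl : ∀ a ∈ l, a ∈ clF F A) :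
    F l ∈ clF F A := by
  have : ∃ n, ∀ a ∈ l, a ∈ clW F A n := by
    induction l with
    | nil => exact ⟨0, by simp⟩
    | cons a l IH =>
      obtain ⟨n₁, hn₁⟩ := IH (fun x hx => hl x (List.mem_cons_of_mem a hx))
      obtain ⟨n₂, hn₂⟩ := Set.mem_iUnion.1 (hl a List.mem_cons_self)
      refine ⟨max n₁ n₂, ?_⟩
      intro x hx
      rcases List.mem_cons.1 hx with rfl | hx
      · exact clW_mono F (le_max_right n₁ n₂) hn₂
      · exact clW_mono F (le_max_left n₁ n₂) (hn₁ x hx)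
  obtain ⟨n, hn⟩ := this
  exact Set.mem_iUnion.2 ⟨n+1, Or.inr ⟨l, hn, rfl⟩⟩

lemma clF_subset_of_closed {A B : Set Ordinal.{u}} (hAB : A ⊆ B)
    (hB : ∀ l ∈ listsIn B, F l ∈ B) : clF F A ⊆ B := by
  have key : ∀ n, ∀ x ∈ clW F A n, x ∈ B := by
    intro n
    induction n with
    | zero => exact fun x hx => hAB hx
    | succ n IH =>
      rintro x (hx' | ⟨l, hl, rfl⟩)
      · exact IH x hx'
      · exact hB l (fun a ha => IH a (hl a ha))
  intro x hx
  obtain ⟨n, hn⟩ := Set.mem_iUnion.1 hx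
  exact key n x hn

lemma clF_countable {A : Set Ordinal.{u}} (hA : A.Countable) : (clF F A).Countable := by
  have : ∀ n, (clW F A n).Countable := by
    intro n
    induction n with
    | zero => exact hA
    | succ n IH => exact IH.union ((listsIn_countable IH).image F)
  exact Set.countable_iUnion this

lemma clF_nonempty_mem (A : Set Ordinal.{u}) : F [] ∈ clF F A :=
  clF_closed F (by simp)

lemma exists_list_bound {ν : Ordinal.{u}} (h0 : 0 < ν) {P : Ordinal.{u} → Ordinal.{u} → Prop}
    (hmono : ∀ μ μ' a, μ ≤ μ' → P μ a → P μ' a) :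
    ∀ l : List Ordinal.{u}, (∀ a ∈ l, ∃ μ < ν, P μ a) → ∃ μ < ν, ∀ a ∈ l, P μ a := by
  intro l
  induction l with
  | nil => exact fun _ => ⟨0, h0, by simp⟩
  | cons a t IHl =>
    intro h
    obtain ⟨μ₁, hμ₁, hμ₁'⟩ := IHl (fun b hb => h b (List.mem_cons_of_mem a hb))
    obtain ⟨μ₂, hμ₂, hμ₂'⟩ := h a List.mem_cons_self
    refine ⟨max μ₁ μ₂, max_lt hμ₁ hμ₂, ?_⟩
    intro b hb
    rcases List.mem_cons.1 hb with rfl | hb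
    · exact hmono μ₂ _ b (le_max_right μ₁ μ₂) hμ₂'
    · exact hmono μ₁ _ b (le_max_left μ₁ μ₂) (hμ₁' b hb)

lemma clF_limit {ν : Ordinal.{u}} (h0 : 0 < ν) (hν : ∀ x < ν, ∃ μ, x < μ ∧ μ < ν) :
    ∀ x ∈ clF F (Set.Iio ν), ∃ μ < ν, x ∈ clF F (Set.Iio μ) := by
  have key : ∀ n, ∀ x ∈ clW F (Set.Iio ν) n, ∃ μ < ν, x ∈ clW F (Set.Iio μ) n := by
    intro n
    induction n with
    | zero =>
      intro x hx
      obtain ⟨μ, h1, h2⟩ := hν x hx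
      exact ⟨μ, h2, h1⟩
    | succ n IH =>
      rintro x (hx | ⟨l, hl, rfl⟩)
      · obtain ⟨μ, h1, h2⟩ := IH x hx
        exact ⟨μ, h1, Or.inl h2⟩
      · have hbd : ∃ μ < ν, ∀ a ∈ l, a ∈ clW F (Set.Iio μ) n := by
          refine exists_list_bound h0 ?_ l (fun a ha => IH a (hl a ha))
          intro μ μ' a hle ha
          exact clW_mono_base F (Set.Iio_subset_Iio hle) n ha
        obtain ⟨μ, h1, h2⟩ := hbd
        exact ⟨μ, h1, Or.inr ⟨l, h2, rfl⟩⟩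
  intro x hx
  obtain ⟨n, hn⟩ := Set.mem_iUnion.1 hx
  obtain ⟨μ, h1, h2⟩ := key n x hn
  exact ⟨μ, h1, Set.mem_iUnion.2 ⟨n, h2⟩⟩

end Aux


/-- Lemma (projective stationarity of `𝒦^f`): suppose `f : ω₁ → ω₁` dominates, modulo
clubs, the canonical function of every nonzero `α < ω₂` (where the canonical functions for
`α` arise from surjections `π : ω₁ → α` as `ν ↦ ot(π '' ν)`).  Then for every finitary
function `F : [ω₂]^{<ω} → ω₂` and every stationary `S ⊆ ω₁` there is a countable
`X ⊆ ω₂` closed under `F` with `δ := X ∩ ω₁ ∈ S` and `f δ > ot X`. -/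
theorem stmt14
    (f : Ordinal → Ordinal) (hf : ∀ ν < omega1, f ν < omega1)
    (hdom : ∀ α, 0 < α → α < omega2 →
      ∀ π : Ordinal → Ordinal, (∀ ξ < omega1, π ξ < α) →
        Set.SurjOn π (Set.Iio omega1) (Set.Iio α) →
        ∃ D, IsClubIn D omega1 ∧ ∀ ν ∈ D, OT (π '' Set.Iio ν) < f ν)
    (F : List Ordinal → Ordinal) (hF : ∀ l : List Ordinal, (∀ a ∈ l, a < omega2) → F l < omega2)
    (S : Set Ordinal) (hS : IsStationaryIn S omega1) :
    ∃ X : Set Ordinal, X.Countable ∧ X ⊆ Set.Iio omega2 ∧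
      (∀ l : List Ordinal, (∀ a ∈ l, a ∈ X) → F l ∈ X) ∧
      ∃ δ ∈ S, X ∩ Set.Iio omega1 = Set.Iio δ ∧ OT X < f δ := by
  classical
  set Y : Ordinal → Set Ordinal := fun ν => clF F (Set.Iio ν) with hYdef
  have hYcnt : ∀ ν, ν < omega1 → (Y ν).Countable :=
    fun ν hν => clF_countable F (countable_of_lt_omega1 hν)
  have hYsub : ∀ ν, ν ≤ omega1 → Y ν ⊆ Set.Iio omega2 := by
    intro ν hν
    refine clF_subset_of_closed F ?_ (fun l hl => hF l hl)
    intro x hx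
    exact lt_of_lt_of_le hx (hν.trans omega1_lt_omega2.le)
  have hYmono : ∀ μ ν : Ordinal, μ ≤ ν → Y μ ⊆ Y ν :=
    fun μ ν h => clF_mono F (Set.Iio_subset_Iio h)
  have hYbase : ∀ ν : Ordinal, Set.Iio ν ⊆ Y ν := fun ν => subset_clF F _
  have hYF : ∀ ν : Ordinal, ∀ l : List Ordinal, (∀ a ∈ l, a ∈ Y ν) → F l ∈ Y ν :=
    fun ν l hl => clF_closed F hl
  have hYne : ∀ ν : Ordinal, F [] ∈ Y ν := fun ν => clF_nonempty_mem F _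
  set X : Set Ordinal := clF F (Set.Iio omega1) with hXdef
  have hXY : ∀ ν : Ordinal, ν ≤ omega1 → Y ν ⊆ X :=
    fun ν h => clF_mono F (Set.Iio_subset_Iio h)
  have hXdec : ∀ x ∈ X, ∃ ν < omega1, x ∈ Y ν :=
    clF_limit F omega1_pos (fun x hx => ⟨x + 1, lt_add_one x, succ_lt_omega1 hx⟩)
  have hXsub : X ⊆ Set.Iio omega2 := hYsub omega1 le_rfl
  -- a strict bound for X below ω₂
  have hbnd : ∀ ν, ν < omega1 → sSup (Y ν) + 1 < omega2 := fun ν hν =>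
    succ_lt_omega2 (sSup_lt_omega2_of_countable (hYcnt ν hν) (fun x hx => hYsub ν hν.le hx))
  set β : Ordinal :=
    ⨆ i : omega1.ToType, (sSup (Y ((Ordinal.ToType.mk (o := omega1)).symm i : Ordinal)) + 1)
    with hβdef
  have hβlt : β < omega2 := by
    rw [hβdef, omega2]
    refine Ordinal.iSup_lt_ord ?_
      (fun i => by rw [← omega2]; exact hbnd _ ((Ordinal.ToType.mk (o := omega1)).symm i).2)
    rw [Cardinal.mk_toType]
    have hreg : (Cardinal.aleph (2:Ordinal)).IsRegular := by
      have := Cardinal.isRegular_aleph_succ (1 : Ordinal)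
      rwa [show Order.succ (1:Ordinal) = 2 by rw [Order.succ_eq_add_one, one_add_one_eq_two]]
        at this
    rw [hreg.cof_eq, omega1, Cardinal.card_ord]
    exact aleph_lt_aleph.2 one_lt_two
  have hXβ : X ⊆ Set.Iio β := by
    intro x hx
    obtain ⟨ν, hν, hxY⟩ := hXdec x hx
    have h1 : x ≤ sSup (Y ν) := le_csSup ⟨omega2, fun y hy => (hYsub ν hν.le hy).le⟩ hxY
    have h2 : sSup (Y ν) + 1 ≤ β := by
      have h3 := Ordinal.le_iSup
        (fun i : omega1.ToType => (sSup (Y ((Ordinal.ToType.mk (o := omega1)).symm i : Ordinal)) + 1))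
        (Ordinal.ToType.mk (o := omega1) ⟨ν, hν⟩)
      simpa only [OrderIso.symm_apply_apply] using h3
    exact lt_of_le_of_lt h1 (lt_of_lt_of_le (lt_add_one _) h2)
  -- the order type of X and its enumeration
  obtain ⟨gX, hgmono, hgim⟩ := OT_spec hXβ
  set α := OT X with hαdef
  have hα0 : 0 < α := by
    rcases eq_zero_or_pos α with h0 | h
    · exfalso
      have h00 : Set.Iio (0:Ordinal) = ∅ := by ext y; simpa using Ordinal.not_lt_zero y
      have : X = ∅ := by rw [← hgim, h0, h00]; simp
      exact absurd (clF_nonempty_mem F (Set.Iio omega1)) (by rw [← hXdef, this]; simp)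
    · exact h
  have hα2 : α < omega2 := lt_of_le_of_lt (OT_le hXβ) hβlt
  set r : Ordinal → Ordinal := Function.invFunOn gX (Set.Iio α) with hrdef
  have hrmem : ∀ x ∈ X, r x < α := by
    intro x hx
    have hx' : x ∈ gX '' Set.Iio α := hgim ▸ hx
    obtain ⟨a, ha, hae⟩ := hx'
    exact Function.invFunOn_mem ⟨a, ha, hae⟩
  have hrleft : ∀ b, b < α → r (gX b) = b := fun b hb => hgmono.injOn.leftInvOn_invFunOn hb
  have hrmono : StrictMonoOn r X := by
    intro x hx y hy hxy
    have hx' : x ∈ gX '' Set.Iio α := hgim ▸ hx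
    have hy' : y ∈ gX '' Set.Iio α := hgim ▸ hy
    obtain ⟨a, ha, rfl⟩ := hx'
    obtain ⟨b, hb, rfl⟩ := hy'
    rw [hrleft a ha, hrleft b hb]
    exact (hgmono.lt_iff_lt ha hb).1 hxy
  -- enumerations of the Y ν
  have huex : ∀ ν : Ordinal, ∃ φ : ℕ → Ordinal, ν < omega1 → Y ν = Set.range φ := by
    intro ν
    by_cases hν : ν < omega1
    · obtain ⟨φ, hφ⟩ := (hYcnt ν hν).exists_eq_range ⟨F [], hYne ν⟩
      exact ⟨φ, fun _ => hφ⟩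
    · exact ⟨fun _ => 0, fun h => absurd h hν⟩
  choose u hu using huex
  set natp : Ordinal → ℕ := fun o => Classical.epsilon (fun n : ℕ => (n : Ordinal) = o)
    with hnatpdef
  have hnatp : ∀ n : ℕ, natp (n : Ordinal) = n := by
    intro n
    rw [hnatpdef]
    have h1 : (↑(Classical.epsilon (fun m : ℕ => (m : Ordinal) = (n : Ordinal))) : Ordinal)
        = (n : Ordinal) := Classical.epsilon_spec (p := fun m : ℕ => (m : Ordinal) = (n : Ordinal)) ⟨n, rfl⟩
    exact Nat.cast_inj.mp h1
  set hfun : Ordinal → Ordinal := fun ξ => u (ξ / Ordinal.omega0) (natp (ξ % Ordinal.omega0))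
    with hfundef
  have hdivlt : ∀ ξ : Ordinal, ξ < omega1 → ξ / Ordinal.omega0 < omega1 := by
    intro ξ hξ
    refine lt_of_le_of_lt (Ordinal.div_le_of_le_mul ?_) hξ
    calc ξ = 1 * ξ := (one_mul ξ).symm
      _ ≤ Ordinal.omega0 * ξ := mul_le_mul_left Ordinal.one_lt_omega0.le ξ
  have hhY : ∀ ξ : Ordinal, ξ < omega1 → hfun ξ ∈ Y (ξ / Ordinal.omega0) := by
    intro ξ hξ
    rw [hu _ (hdivlt ξ hξ)]
    exact ⟨_, rfl⟩
  have hheval : ∀ (μ : Ordinal) (n : ℕ), hfun (Ordinal.omega0 * μ + n) = u μ n := by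
    intro μ n
    have hdiv : (Ordinal.omega0 * μ + n) / Ordinal.omega0 = μ := by
      rw [Ordinal.mul_add_div _ Ordinal.omega0_ne_zero,
        Ordinal.div_eq_zero_of_lt (Ordinal.nat_lt_omega0 n), add_zero]
    have hmod : (Ordinal.omega0 * μ + n) % Ordinal.omega0 = n := by
      rw [Ordinal.mul_add_mod_self, Ordinal.mod_eq_of_lt (Ordinal.nat_lt_omega0 n)]
    rw [hfundef]
    simp only [hdiv, hmod, hnatp]
  set π : Ordinal → Ordinal := fun ξ => r (hfun ξ) with hπdef
  have hπlt : ∀ ξ, ξ < omega1 → π ξ < α := by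
    intro ξ hξ
    exact hrmem _ (hXY _ (hdivlt ξ hξ).le (hhY ξ hξ))
  have hπsurj : Set.SurjOn π (Set.Iio omega1) (Set.Iio α) := by
    intro b hb
    have hgb : gX b ∈ X := hgim ▸ ⟨b, hb, rfl⟩
    obtain ⟨ν, hν, hbY⟩ := hXdec _ hgb
    have hmem : gX b ∈ Set.range (u ν) := (hu ν hν) ▸ hbY
    obtain ⟨n, hn⟩ := hmem
    refine ⟨Ordinal.omega0 * ν + n, ?_, ?_⟩
    · exact add_nat_lt_omega1 (mul_omega0_lt_omega1 hν) n
    · show r (hfun (Ordinal.omega0 * ν + n)) = b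
      rw [hheval ν n, hn]
      exact hrleft b hb
  obtain ⟨D, hD, hDlt⟩ := hdom α hα0 hα2 π hπlt hπsurj
  -- bounds for the countable part of each Y μ
  set t : Ordinal → Ordinal := fun μ => sSup (Y μ ∩ Set.Iio omega1) + 1 with htdef
  have htlt : ∀ μ, μ < omega1 → t μ < omega1 := fun μ hμ =>
    succ_lt_omega1 (sSup_lt_omega1 ((hYcnt μ hμ).mono Set.inter_subset_left)
      (fun x hx => hx.2))
  have htbd : ∀ μ x, x ∈ Y μ → x < omega1 → x < t μ := fun μ x hx hx1 =>
    lt_of_le_of_lt (le_csSup ⟨omega1, fun y hy => le_of_lt hy.2⟩ (Set.mem_inter hx hx1)) (lt_add_one _)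
  -- the club E
  set E : Set Ordinal := {ν | ν < omega1 ∧ 0 < ν ∧ (∀ x < ν, ∃ ρ, x < ρ ∧ ρ < ν) ∧
    Ordinal.omega0 * ν = ν ∧ ∀ μ < ν, t μ < ν} with hEdef
  have hE : IsClubIn E omega1 := by
    refine ⟨fun x hx => hx.1, ?_, ?_⟩
    · intro a ha
      set step : Ordinal → Ordinal := fun x =>
        max (max (Ordinal.omega0 * x) (sSup (t '' Set.Iio x) + 1)) (x + 1) with hstepdef
      have hstep : ∀ x, x < omega1 → x < step x ∧ step x < omega1 := by
        intro x hx
        constructor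
        · exact lt_of_lt_of_le (lt_add_one x) (le_max_right _ _)
        · refine max_lt (max_lt (mul_omega0_lt_omega1 hx) (succ_lt_omega1
            (sSup_lt_omega1 ((countable_of_lt_omega1 hx).image t) ?_))) (succ_lt_omega1 hx)
          rintro y ⟨μ, hμ, rfl⟩
          exact htlt μ (lt_trans hμ hx)
      set b : ℕ → Ordinal := fun n => Nat.rec (a + 1) (fun _ x => step x) n with hbdef
      have hbs : ∀ n, b (n + 1) = step (b n) := fun _ => rfl
      have hblt : ∀ n, b n < omega1 := by
        intro n
        induction n with
        | zero => exact succ_lt_omega1 ha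
        | succ n IH => rw [hbs]; exact (hstep _ IH).2
      have hbmono : ∀ n, b n < b (n + 1) := fun n => by rw [hbs]; exact (hstep _ (hblt n)).1
      have hbd : BddAbove (Set.range b) := ⟨omega1, by rintro x ⟨n, rfl⟩; exact (hblt n).le⟩
      set γ := sSup (Set.range b) with hγdef
      have hγ : γ < omega1 := sSup_lt_omega1 (Set.countable_range b)
        (by rintro x ⟨n, rfl⟩; exact hblt n)
      have hble : ∀ n, b n ≤ γ := fun n => le_csSup hbd ⟨n, rfl⟩
      have hex : ∀ x, x < γ → ∃ n, x < b n := by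
        intro x hx
        obtain ⟨y, ⟨n, rfl⟩, hxy⟩ := exists_lt_of_lt_csSup ⟨b 0, Set.mem_range_self 0⟩ hx
        exact ⟨n, hxy⟩
      have hdens : ∀ x < γ, ∃ ρ, x < ρ ∧ ρ < γ := by
        intro x hx
        obtain ⟨n, hn⟩ := hex x hx
        exact ⟨b n, hn, lt_of_lt_of_le (hbmono n) (hble (n + 1))⟩
      have hγ0 : 0 < γ :=
        lt_of_lt_of_le (lt_of_le_of_lt (zero_le (a := a)) (lt_add_one a)) (hble 0)
      have hstep1 : ∀ n, Ordinal.omega0 * b n ≤ b (n + 1) := by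
        intro n; rw [hbs]
        exact le_trans (le_max_left _ _) (le_max_left _ _)
      have hstep2 : ∀ n, sSup (t '' Set.Iio (b n)) + 1 ≤ b (n + 1) := by
        intro n; rw [hbs]
        exact le_trans (le_max_right _ _) (le_max_left _ _)
      have hlim : Order.IsSuccLimit γ := by
        refine Ordinal.isSuccLimit_iff.2 ⟨hγ0.ne', Order.isSuccPrelimit_of_succ_lt ?_⟩
        intro x hx
        obtain ⟨ρ, h1, h2⟩ := hdens x hx
        exact lt_of_le_of_lt (Order.succ_le_of_lt h1) h2
      have hmul : Ordinal.omega0 * γ = γ := by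
        apply le_antisymm
        · rw [Ordinal.mul_le_iff_of_isSuccLimit hlim]
          intro x hx
          obtain ⟨n, hn⟩ := hex x hx
          calc Ordinal.omega0 * x ≤ Ordinal.omega0 * b n := mul_le_mul_right hn.le _
            _ ≤ b (n + 1) := hstep1 n
            _ ≤ γ := hble (n + 1)
        · calc γ = 1 * γ := (one_mul γ).symm
            _ ≤ Ordinal.omega0 * γ := mul_le_mul_left Ordinal.one_lt_omega0.le γ
      have htcl : ∀ μ < γ, t μ < γ := by
        intro μ hμ
        obtain ⟨n, hn⟩ := hex μ hμ
        have h1 : t μ ≤ sSup (t '' Set.Iio (b n)) := by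
          refine le_csSup ⟨omega1, ?_⟩ ⟨μ, hn, rfl⟩
          rintro y ⟨ρ, hρ, rfl⟩
          exact (htlt ρ (lt_trans hρ (hblt n))).le
        calc t μ ≤ sSup (t '' Set.Iio (b n)) := h1
          _ < sSup (t '' Set.Iio (b n)) + 1 := lt_add_one _
          _ ≤ b (n + 1) := hstep2 n
          _ ≤ γ := hble (n + 1)
      exact ⟨γ, ⟨hγ, hγ0, hdens, hmul, htcl⟩, lt_of_lt_of_le (lt_add_one a) (hble 0)⟩
    · intro T hT hTne hTlt
      by_cases hmem : sSup T ∈ T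
      · exact hT hmem
      set γ := sSup T with hγdef
      have hbdT : BddAbove T := ⟨omega1, fun x hx => (hT hx).1.le⟩
      have hTle : ∀ y ∈ T, y ≤ γ := fun y hy => le_csSup hbdT hy
      have hTlt' : ∀ y ∈ T, y < γ := fun y hy =>
        lt_of_le_of_ne (hTle y hy) (fun h => hmem (h ▸ hy))
      have hex : ∀ x, x < γ → ∃ y ∈ T, x < y := fun x hx => exists_lt_of_lt_csSup hTne hx
      have hγ0 : 0 < γ := by
        obtain ⟨y, hy⟩ := hTne
        exact lt_of_lt_of_le (hT hy).2.1 (hTle y hy)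
      have hdens : ∀ x < γ, ∃ ρ, x < ρ ∧ ρ < γ := by
        intro x hx
        obtain ⟨y, hy, hxy⟩ := hex x hx
        exact ⟨y, hxy, hTlt' y hy⟩
      have hlim : Order.IsSuccLimit γ := by
        refine Ordinal.isSuccLimit_iff.2 ⟨hγ0.ne', Order.isSuccPrelimit_of_succ_lt ?_⟩
        intro x hx
        obtain ⟨ρ, h1, h2⟩ := hdens x hx
        exact lt_of_le_of_lt (Order.succ_le_of_lt h1) h2
      have hmul : Ordinal.omega0 * γ = γ := by
        apply le_antisymm
        · rw [Ordinal.mul_le_iff_of_isSuccLimit hlim]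
          intro x hx
          obtain ⟨y, hy, hxy⟩ := hex x hx
          calc Ordinal.omega0 * x ≤ Ordinal.omega0 * y := mul_le_mul_right hxy.le _
            _ = y := (hT hy).2.2.2.1
            _ ≤ γ := hTle y hy
        · calc γ = 1 * γ := (one_mul γ).symm
            _ ≤ Ordinal.omega0 * γ := mul_le_mul_left Ordinal.one_lt_omega0.le γ
      refine ⟨hTlt, hγ0, hdens, hmul, ?_⟩
      intro μ hμ
      obtain ⟨y, hy, hμy⟩ := hex μ hμ
      exact lt_of_lt_of_le ((hT hy).2.2.2.2 μ hμy) (hTle y hy)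
  -- meet the stationary set
  obtain ⟨ν, hνS, hνE, hνD⟩ := hS.2 (E ∩ D) (hE.inter hD)
  obtain ⟨hν1, hν0, hνdens, hνmul, hνt⟩ := hνE
  refine ⟨Y ν, hYcnt ν hν1, hYsub ν hν1.le, hYF ν, ν, hνS, ?_, ?_⟩
  · -- Y ν ∩ Iio ω₁ = Iio ν
    ext x
    constructor
    · rintro ⟨hx1, hx2⟩
      obtain ⟨μ, hμν, hxμ⟩ := clF_limit F hν0 hνdens x hx1
      exact lt_trans (htbd μ x hxμ hx2) (hνt μ hμν)
    · intro hx
      exact ⟨hYbase ν hx, lt_trans hx hν1⟩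
  · -- OT (Y ν) < f ν
    have hkey : hfun '' Set.Iio ν = Y ν := by
      apply Set.Subset.antisymm
      · rintro x ⟨ξ, hξ, rfl⟩
        have hξω : ξ < omega1 := lt_trans hξ hν1
        have hdv : ξ / Ordinal.omega0 < ν := by
          rw [Ordinal.div_lt Ordinal.omega0_ne_zero, hνmul]
          exact hξ
        exact hYmono _ _ hdv.le (hhY ξ hξω)
      · intro x hx
        obtain ⟨μ, hμν, hxμ⟩ := clF_limit F hν0 hνdens x hx
        have hμ1 : μ < omega1 := lt_trans hμν hν1
        rw [show clF F (Set.Iio μ) = Y μ from rfl, hu μ hμ1] at hxμ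
        obtain ⟨n, hn⟩ := hxμ
        refine ⟨Ordinal.omega0 * μ + n, ?_, by rw [hheval μ n, hn]⟩
        show Ordinal.omega0 * μ + n < ν
        calc Ordinal.omega0 * μ + n < Ordinal.omega0 * μ + Ordinal.omega0 :=
              (add_lt_add_iff_left _).2 (Ordinal.nat_lt_omega0 n)
          _ = Ordinal.omega0 * (μ + 1) := by rw [mul_add, mul_one]
          _ ≤ Ordinal.omega0 * ν := by
              refine mul_le_mul_right ?_ _
              rw [Ordinal.add_one_eq_succ]
              exact Order.succ_le_of_lt hμν
          _ = ν := hνmul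
    have him2 : π '' Set.Iio ν = r '' Y ν := by
      rw [show π = r ∘ hfun from rfl, Set.image_comp, hkey]
    have hOT : OT (r '' Y ν) = OT (Y ν) := OT_image (hrmono.mono (hXY ν hν1.le))
    calc OT (Y ν) = OT (π '' Set.Iio ν) := by rw [him2, hOT]
      _ < f ν := hDlt ν hνD
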